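/- Define a sequence γ : ℤ⁺ → ℚ by the recursion γ_1 = 1, γ_{2k} = 1 + γ_k, and γ_{2k+1} = 1/γ_{2k} = 1/(1 + γ_k) for k ∈ ℤ⁺. Then the map k ↦ γ_k is a bijection from ℤ⁺ onto the set ℚ⁺ of positive rational numbers; that is, every positive rational number occurs exactly once in the sequence γ_1, γ_2, γ_3, …. -/

import Mathlib

private lemma rat_num_den {n : ℤ} {d : ℕ} (hd : d ≠ 0) (hc : n.natAbs.Coprime d)
    {q : ℚ} (h : q = (n : ℚ) / (d : ℚ)) : q.num = n ∧ q.den = d := by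
  have : q = Rat.mk' n d hd hc := by
    rw [Rat.mk_eq_divInt, Rat.divInt_eq_div, h]; norm_num
  rw [this]
  exact ⟨rfl, rfl⟩

private lemma sub_one_num_den (q : ℚ) :
    (q - 1).num = q.num - q.den ∧ (q - 1).den = q.den := by
  have hcop : IsCoprime q.num (q.den : ℤ) := by
    rw [Int.isCoprime_iff_gcd_eq_one]; exact q.reduced
  have hcop2 : IsCoprime (q.num - q.den) (q.den : ℤ) := by
    simpa [sub_eq_add_neg] using hcop.add_mul_left_left (-1)
  have hc : (q.num - q.den).natAbs.Coprime q.den := by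
    rw [Int.isCoprime_iff_gcd_eq_one] at hcop2
    simpa [Int.gcd] using hcop2
  refine rat_num_den q.den_nz hc ?_
  push_cast
  rw [sub_div, Rat.num_div_den]
  have : (q.den : ℚ) ≠ 0 := by exact_mod_cast q.den_nz
  field_simp

private lemma inv_num_den {q : ℚ} (hq : 0 < q) :
    q⁻¹.num = q.den ∧ q⁻¹.den = q.num.natAbs := by
  have hnum : 0 < q.num := Rat.num_pos.mpr hq
  have hnz : q.num.natAbs ≠ 0 := by omega
  have hc : (q.den : ℤ).natAbs.Coprime q.num.natAbs := by
    simpa [Nat.coprime_comm] using q.reduced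
  refine rat_num_den hnz hc ?_
  have hcast : ((q.num.natAbs : ℕ) : ℚ) = (q.num : ℚ) := by
    have h := Int.natAbs_of_nonneg hnum.le
    rw [← h]
    exact (Int.cast_natCast _).symm
  rw [hcast]
  rw [inv_eq_one_div]
  conv_lhs => rw [← Rat.num_div_den q]
  rw [one_div_div]
  norm_num

private lemma one_lt_num_den {q : ℚ} (hq : 1 < q) : (q.den : ℤ) < q.num := by
  have h0 : 0 < q - 1 := by linarith
  have := (sub_one_num_den q).1
  have hn : 0 < (q - 1).num := Rat.num_pos.mpr h0
  omega

private lemma pnat_cases (k : ℕ+) :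
    k = 1 ∨ (∃ m : ℕ+, k = 2 * m) ∨ (∃ m : ℕ+, k = 2 * m + 1) := by
  rcases eq_or_lt_of_le k.one_le with h | h
  · exact Or.inl h.symm
  · have h2 : 2 ≤ (k : ℕ) := h
    rcases Nat.even_or_odd (k : ℕ) with ⟨m, hm⟩ | ⟨m, hm⟩
    · have hm1 : 0 < m := by omega
      refine Or.inr (Or.inl ⟨⟨m, hm1⟩, ?_⟩)
      apply PNat.coe_injective
      change (k:ℕ) = 2 * m
      push_cast [PNat.mk_coe]; omega
    · have hm1 : 0 < m := by omega
      refine Or.inr (Or.inr ⟨⟨m, hm1⟩, ?_⟩)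
      apply PNat.coe_injective
      change (k:ℕ) = 2 * m + 1
      push_cast [PNat.mk_coe]; omega

/-- If `γ : ℤ⁺ → ℚ` satisfies `γ 1 = 1`, `γ (2k) = 1 + γ k` and `γ (2k+1) = 1/γ (2k)`,
then `k ↦ γ k` is a bijection from `ℤ⁺` onto the positive rationals. -/
theorem stmt_14 (γ : ℕ+ → ℚ) (h1 : γ 1 = 1)
    (h2 : ∀ k : ℕ+, γ (2 * k) = 1 + γ k)
    (h3 : ∀ k : ℕ+, γ (2 * k + 1) = 1 / γ (2 * k)) :
    Set.BijOn γ Set.univ {q : ℚ | 0 < q} := by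
  -- positivity
  have pos : ∀ k : ℕ+, 0 < γ k := by
    intro k
    induction k using PNat.strongInductionOn with
    | _ k ih =>
      rcases pnat_cases k with rfl | ⟨m, rfl⟩ | ⟨m, rfl⟩
      · rw [h1]; norm_num
      · rw [h2]
        have := ih m (by
          have : (m : ℕ) < 2 * m := by have := m.pos; omega
          exact_mod_cast this)
        linarith
      · rw [h3, h2]
        have := ih m (by
          have : (m : ℕ) < 2 * m + 1 := by have := m.pos; omega
          exact_mod_cast this)
        positivity
  have gt1 : ∀ m : ℕ+, 1 < γ (2 * m) := by
    intro m; rw [h2]; have := pos m; linarith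
  have lt1 : ∀ m : ℕ+, γ (2 * m + 1) < 1 := by
    intro m; rw [h3]
    have h := gt1 m
    rw [div_lt_one (by linarith)]; linarith
  -- γ k = 1 ↔ k = 1
  have eq1 : ∀ k : ℕ+, γ k = 1 → k = 1 := by
    intro k hk
    rcases pnat_cases k with rfl | ⟨m, rfl⟩ | ⟨m, rfl⟩
    · rfl
    · exact absurd hk (by have := gt1 m; linarith)
    · exact absurd hk (by have := lt1 m; linarith)
  -- injectivity
  have inj : ∀ n : ℕ, ∀ k l : ℕ+, (k : ℕ) ≤ n → γ k = γ l → k = l := by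
    intro n
    induction n with
    | zero => intro k _ hk _; exact absurd hk (by have := k.pos; omega)
    | succ n ih =>
      intro k l hk hkl
      rcases pnat_cases k with rfl | ⟨m, rfl⟩ | ⟨m, rfl⟩
      · exact (eq1 l (by rw [← hkl, h1])).symm
      · rcases pnat_cases l with rfl | ⟨s, rfl⟩ | ⟨s, rfl⟩
        · exact absurd (h1 ▸ hkl) (by have := gt1 m; intro h; linarith)
        · rw [h2, h2] at hkl
          have hms : γ m = γ s := by linarith
          have : m = s := ih m s (by
            have h1 : (m:ℕ) < ((2*m : ℕ+):ℕ) := by push_cast; have := m.pos; omega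
            omega) hms
          rw [this]
        · exact absurd hkl (by have := gt1 m; have := lt1 s; intro h; linarith)
      · rcases pnat_cases l with rfl | ⟨s, rfl⟩ | ⟨s, rfl⟩
        · exact absurd (h1 ▸ hkl) (by have := lt1 m; intro h; linarith)
        · exact absurd hkl (by have := lt1 m; have := gt1 s; intro h; linarith)
        · rw [h3, h3] at hkl
          have hm0 : (0:ℚ) < γ (2*m) := by have := gt1 m; linarith
          have hs0 : (0:ℚ) < γ (2*s) := by have := gt1 s; linarith
          have h2eq : γ (2*m) = γ (2*s) := by
            field_simp at hkl
            linarith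
          rw [h2, h2] at h2eq
          have hms : γ m = γ s := by linarith
          have : m = s := ih m s (by
            have h1 : (m:ℕ) < ((2*m+1 : ℕ+):ℕ) := by push_cast; have := m.pos; omega
            omega) hms
          rw [this]
  -- surjectivity
  have surj : ∀ n : ℕ, ∀ q : ℚ, 0 < q → q.num.natAbs + q.den ≤ n → ∃ k : ℕ+, γ k = q := by
    intro n
    induction n with
    | zero => intro q hq hn; exact absurd hn (by have := q.pos; omega)
    | succ n ih =>
      intro q hq hn
      rcases lt_trichotomy q 1 with hlt | rfl | hgt
      · -- q < 1 : use q⁻¹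
        have hinv1 : 1 < q⁻¹ := (one_lt_inv₀ hq).2 hlt
        have hinvpos : 0 < q⁻¹ := by positivity
        obtain ⟨hin, hid⟩ := inv_num_den hq
        obtain ⟨hsn, hsd⟩ := sub_one_num_den q⁻¹
        have hr0 : 0 < q⁻¹ - 1 := by linarith
        have hnumpos : 0 < q.num := Rat.num_pos.mpr hq
        have hmeas : (q⁻¹ - 1).num.natAbs + (q⁻¹ - 1).den ≤ n := by
          have hlt2 : (q⁻¹.den : ℤ) < q⁻¹.num := one_lt_num_den hinv1
          have hdpos := q.pos
          rw [hsn, hsd, hin, hid]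
          rw [hin, hid] at hlt2
          omega
        obtain ⟨k, hk⟩ := ih (q⁻¹ - 1) hr0 hmeas
        refine ⟨2 * k + 1, ?_⟩
        rw [h3, h2, hk]
        have : 1 + (q⁻¹ - 1) = q⁻¹ := by ring
        rw [this, one_div, inv_inv]
      · exact ⟨1, h1⟩
      · -- q > 1
        obtain ⟨hsn, hsd⟩ := sub_one_num_den q
        have hr0 : 0 < q - 1 := by linarith
        have hmeas : (q - 1).num.natAbs + (q - 1).den ≤ n := by
          have hlt2 : (q.den : ℤ) < q.num := one_lt_num_den hgt
          have hdpos := q.pos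
          rw [hsn, hsd]
          omega
        obtain ⟨k, hk⟩ := ih (q - 1) hr0 hmeas
        refine ⟨2 * k, ?_⟩
        rw [h2, hk]; ring
  constructor
  · intro k _
    exact pos k
  constructor
  · intro a _ b _ hab
    exact inj a a b le_rfl hab
  · intro q hq
    obtain ⟨k, hk⟩ := surj (q.num.natAbs + q.den) q hq le_rfl
    exact ⟨k, Set.mem_univ k, hk⟩
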